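/- Asymptotics of the covariant-stability discriminant: let λ > 0 and, for r ∈ (0,1), define S(r) = √( ((1−λ)/2)² + λ·artanh(r)/r ), Γ(r) = −(1+λ)/2 + S(r), and χ(r) = r(1+Γ(r)). Then lim_{r→1⁻} χ(r) = +∞, lim_{r→1⁻} Γ(r) = +∞, and lim_{r→1⁻} ( χ(r) − Γ(r) ) = 1; that is, as the imaginary wavenumber χ → ∞, the discriminant |χ| − Γ of the exact scatteringless dispersion relation asymptotically approaches 1. -/

import Mathlib

/-!
Statement 11: asymptotics of the covariant-stability discriminant of the exact
scatteringless dispersion relation: as `r → 1⁻`, `χ(r) → +∞`, `Γ(r) → +∞`, and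
`χ(r) − Γ(r) → 1`.
-/

noncomputable section
open Real Filter

/-- The inverse hyperbolic tangent, `artanh x = (1/2) log((1+x)/(1−x))`. -/
def artanh (x : ℝ) : ℝ := (1 / 2) * Real.log ((1 + x) / (1 - x))

/-- `S(r) = √(((1−λ)/2)² + λ·artanh(r)/r)`. -/
def Sfun (lam r : ℝ) : ℝ := Real.sqrt (((1 - lam) / 2) ^ 2 + lam * _root_.artanh r / r)

/-- `Γ(r) = −(1+λ)/2 + S(r)`. -/
def Gam (lam r : ℝ) : ℝ := -(1 + lam) / 2 + Sfun lam r

/-- `χ(r) = r(1 + Γ(r))`. -/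
def chi (lam r : ℝ) : ℝ := r * (1 + Gam lam r)

lemma tendsto_sqrt_atTop : Tendsto Real.sqrt atTop atTop := by
  rw [tendsto_atTop_atTop]
  intro b
  refine ⟨max (b ^ 2) 0, fun a ha => ?_⟩
  have h1 : Real.sqrt (b ^ 2) ≤ Real.sqrt a :=
    Real.sqrt_le_sqrt (le_trans (le_max_left _ _) ha)
  rw [Real.sqrt_sq_eq_abs] at h1
  exact le_trans (le_abs_self b) h1

lemma sqrt_le_one_add (x : ℝ) (hx : 0 ≤ x) : Real.sqrt x ≤ 1 + x := by
  nlinarith [Real.sq_sqrt hx, Real.sqrt_nonneg x, sq_nonneg (Real.sqrt x - 1)]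

theorem discriminant_asymptotics (lam : ℝ) (hlam : 0 < lam) :
    Tendsto (fun r => chi lam r) (nhdsWithin 1 (Set.Iio 1)) atTop ∧
    Tendsto (fun r => Gam lam r) (nhdsWithin 1 (Set.Iio 1)) atTop ∧
    Tendsto (fun r => chi lam r - Gam lam r) (nhdsWithin 1 (Set.Iio 1)) (nhds 1) := by
  set l := nhdsWithin (1 : ℝ) (Set.Iio 1) with hl
  -- basic limits
  have hr1 : Tendsto (fun r : ℝ => r) l (nhds 1) :=
    tendsto_id.mono_left nhdsWithin_le_nhds
  have h1r0 : Tendsto (fun r : ℝ => 1 - r) l (nhds 0) := by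
    have := (tendsto_const_nhds (x := (1:ℝ)) (f := l)).sub hr1
    simpa using this
  have h1r : Tendsto (fun r : ℝ => 1 - r) l (nhdsWithin 0 (Set.Ioi 0)) := by
    rw [tendsto_nhdsWithin_iff]
    refine ⟨h1r0, ?_⟩
    filter_upwards [self_mem_nhdsWithin] with r hr
    simp only [Set.mem_Iio] at hr
    simpa using hr
  have hev : ∀ᶠ r in l, r ∈ Set.Ioo (0:ℝ) 1 := by
    have h1 : ∀ᶠ r in l, r ∈ Set.Iio (1:ℝ) := self_mem_nhdsWithin
    have h2 : ∀ᶠ r in l, (0:ℝ) < r := by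
      have : Set.Ioi (0:ℝ) ∈ nhds (1:ℝ) := Ioi_mem_nhds one_pos
      exact eventually_nhdsWithin_of_eventually_nhds this
    filter_upwards [h1, h2] with r hr1' hr2
    exact ⟨hr2, hr1'⟩
  -- artanh → atTop
  have hart : Tendsto _root_.artanh l atTop := by
    have hinv : Tendsto (fun r : ℝ => (1 - r)⁻¹) l atTop :=
      tendsto_inv_nhdsGT_zero.comp h1r
    have hnum : Tendsto (fun r : ℝ => 1 + r) l (nhds 2) := by
      have := (tendsto_const_nhds (x := (1:ℝ)) (f := l)).add hr1
      simpa [one_add_one_eq_two] using this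
    have hfrac : Tendsto (fun r : ℝ => (1 + r) / (1 - r)) l atTop := by
      simp only [div_eq_mul_inv]
      exact hnum.pos_mul_atTop two_pos hinv
    have hlog : Tendsto (fun r : ℝ => Real.log ((1 + r) / (1 - r))) l atTop :=
      Real.tendsto_log_atTop.comp hfrac
    have := (Filter.tendsto_const_mul_atTop_of_pos (by norm_num : (0:ℝ) < 1/2)).2 hlog
    exact this.congr fun r => rfl
  -- S → atTop
  have hS2 : Tendsto (fun r : ℝ => ((1 - lam) / 2) ^ 2 + lam * _root_.artanh r / r) l atTop := by
    have hdiv : Tendsto (fun r : ℝ => lam / r) l (nhds lam) := by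
      have := (tendsto_const_nhds (x := lam) (f := l)).div hr1 one_ne_zero
      simpa [Pi.div_def] using this
    have hmul : Tendsto (fun r : ℝ => lam / r * _root_.artanh r) l atTop :=
      hdiv.pos_mul_atTop hlam hart
    have hmul' : Tendsto (fun r : ℝ => lam * _root_.artanh r / r) l atTop :=
      hmul.congr fun r => by ring
    exact tendsto_atTop_add_const_left l _ hmul'
  have hS : Tendsto (fun r => Sfun lam r) l atTop := _root_.tendsto_sqrt_atTop.comp hS2
  have hG : Tendsto (fun r => Gam lam r) l atTop :=
    tendsto_atTop_add_const_left l _ hS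
  have hchi : Tendsto (fun r => chi lam r) l atTop := by
    have h1G : Tendsto (fun r : ℝ => 1 + Gam lam r) l atTop :=
      tendsto_atTop_add_const_left l _ hG
    exact hr1.pos_mul_atTop one_pos h1G
  refine ⟨hchi, hG, ?_⟩
  -- (1-r) * artanh r → 0
  have t2 : Tendsto (fun r : ℝ => Real.log (1 - r) * (1 - r)) l (nhds 0) := by
    have h := tendsto_log_mul_rpow_nhdsGT_zero (r := 1) one_pos
    simp only [Real.rpow_one] at h
    exact h.comp h1r
  have t1 : Tendsto (fun r : ℝ => (1 - r) * Real.log (1 + r)) l (nhds 0) := by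
    have hnum : Tendsto (fun r : ℝ => 1 + r) l (nhds 2) := by
      have := (tendsto_const_nhds (x := (1:ℝ)) (f := l)).add hr1
      simpa [one_add_one_eq_two] using this
    have hlog : Tendsto (fun r : ℝ => Real.log (1 + r)) l (nhds (Real.log 2)) :=
      (Real.continuousAt_log (by norm_num)).tendsto.comp hnum
    have := h1r0.mul hlog
    simpa using this
  have hA : Tendsto (fun r : ℝ => (1 - r) * _root_.artanh r) l (nhds 0) := by
    have hcomb : Tendsto (fun r : ℝ =>
        (1/2 : ℝ) * ((1 - r) * Real.log (1 + r) - Real.log (1 - r) * (1 - r))) l (nhds 0) := by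
      have := (t1.sub t2).const_mul ((1:ℝ)/2)
      simpa using this
    refine hcomb.congr' ?_
    filter_upwards [hev] with r hr
    have h1 : (0:ℝ) < 1 + r := by linarith [hr.1]
    have h2 : (0:ℝ) < 1 - r := by linarith [hr.2]
    simp only [_root_.artanh]
    rw [Real.log_div (ne_of_gt h1) (ne_of_gt h2)]
    ring
  -- (1-r) * Sfun → 0 by squeeze
  have hUB : Tendsto (fun r : ℝ =>
      (1 - r) * (1 + ((1 - lam) / 2) ^ 2) + lam * ((1 - r) * _root_.artanh r) / r) l (nhds 0) := by
    have p1 : Tendsto (fun r : ℝ => (1 - r) * (1 + ((1 - lam) / 2) ^ 2)) l (nhds 0) := by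
      have := h1r0.mul_const (1 + ((1 - lam) / 2) ^ 2)
      simpa using this
    have p2 : Tendsto (fun r : ℝ => lam * ((1 - r) * _root_.artanh r) / r) l (nhds 0) := by
      have := (hA.const_mul lam).div hr1 one_ne_zero
      simpa [Pi.div_def] using this
    have := p1.add p2
    simpa using this
  have h0 : Tendsto (fun r : ℝ => (1 - r) * Sfun lam r) l (nhds 0) := by
    apply squeeze_zero' (g := fun r : ℝ =>
      (1 - r) * (1 + ((1 - lam) / 2) ^ 2) + lam * ((1 - r) * _root_.artanh r) / r)
    · filter_upwards [hev] with r hr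
      have h2 : (0:ℝ) ≤ 1 - r := by linarith [hr.2]
      exact mul_nonneg h2 (Real.sqrt_nonneg _)
    · filter_upwards [hev] with r hr
      have hr0 : (0:ℝ) < r := hr.1
      have h2 : (0:ℝ) ≤ 1 - r := by linarith [hr.2]
      have hart_nonneg : 0 ≤ _root_.artanh r := by
        have h1 : (1:ℝ) ≤ (1 + r) / (1 - r) := by
          rw [le_div_iff₀ (by linarith [hr.2])]
          linarith [hr.1]
        have := Real.log_nonneg h1
        simp only [_root_.artanh]
        positivity
      have hx : (0:ℝ) ≤ ((1 - lam) / 2) ^ 2 + lam * _root_.artanh r / r := by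
        have : 0 ≤ lam * _root_.artanh r / r := by positivity
        positivity
      have hsq : Sfun lam r ≤ 1 + (((1 - lam) / 2) ^ 2 + lam * _root_.artanh r / r) :=
        sqrt_le_one_add _ hx
      have := mul_le_mul_of_nonneg_left hsq h2
      calc (1 - r) * Sfun lam r
          ≤ (1 - r) * (1 + (((1 - lam) / 2) ^ 2 + lam * _root_.artanh r / r)) := this
        _ = (1 - r) * (1 + ((1 - lam) / 2) ^ 2) + lam * ((1 - r) * _root_.artanh r) / r := by
            field_simp
            ring
    · exact hUB
  -- final limit
  have hfinal : Tendsto (fun r : ℝ =>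
      r + (r - 1) * (-(1 + lam) / 2) - (1 - r) * Sfun lam r) l (nhds 1) := by
    have p1 : Tendsto (fun r : ℝ => (r - 1) * (-(1 + lam) / 2)) l (nhds 0) := by
      have hr10 : Tendsto (fun r : ℝ => r - 1) l (nhds 0) := by
        have := hr1.sub (tendsto_const_nhds (x := (1:ℝ)) (f := l))
        simpa using this
      have := hr10.mul_const (-(1 + lam) / 2)
      simpa using this
    have := (hr1.add p1).sub h0
    simpa using this
  refine hfinal.congr fun r => ?_
  simp only [chi, Gam]
  ring
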